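/- Let t be an integer with t > 2, let R = ℤ[α] = ℤ[X]/(X² − tX + 1) with α the image of X, and let m, m' be integers with m·m' = t − 2 that are coprime (IsCoprime in ℤ). Then, as ideals of R, (m, α−1)·(m', α−1) = (α−1), i.e. the product of the ideal generated by m and α−1 with the ideal generated by m' and α−1 equals the principal ideal generated by α−1. -/

import Mathlib

open Polynomial

/-- The order `ℤ[α] = ℤ[X]/(X² − tX + 1)`. -/
def QuadOrd (t : ℤ) : Type :=
  AdjoinRoot ((X : ℤ[X]) ^ 2 - C t * X + 1)

noncomputable instance (t : ℤ) : CommRing (QuadOrd t) :=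
  inferInstanceAs (CommRing (AdjoinRoot _))

/-- The root `α`, i.e. the image of `X` in `ℤ[X]/(X² − tX + 1)`. -/
noncomputable def ordAlpha (t : ℤ) : QuadOrd t :=
  AdjoinRoot.root _

lemma ordAlpha_sq (t : ℤ) : (ordAlpha t) ^ 2 - (t : QuadOrd t) * ordAlpha t + 1 = 0 := by
  have h := AdjoinRoot.mk_self (f := (X : ℤ[X]) ^ 2 - C t * X + 1)
  have : (AdjoinRoot.mk ((X : ℤ[X]) ^ 2 - C t * X + 1)) ((X : ℤ[X]) ^ 2 - C t * X + 1)
      = (ordAlpha t) ^ 2 - (t : QuadOrd t) * ordAlpha t + 1 := by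
    simp [ordAlpha, map_add, map_sub, map_mul, map_pow]
    rfl
  rw [this] at h
  exact h

theorem ideal_product_inverse_classes (t : ℤ) (ht : 2 < t)
    (m m' : ℤ) (hmm : m * m' = t - 2) (hcop : IsCoprime m m') :
    Ideal.span ({(m : QuadOrd t), ordAlpha t - 1} : Set (QuadOrd t)) *
        Ideal.span ({(m' : QuadOrd t), ordAlpha t - 1} : Set (QuadOrd t)) =
      Ideal.span ({ordAlpha t - 1} : Set (QuadOrd t)) := by
  have hα := ordAlpha_sq t
  have key : (ordAlpha t - 1) * (ordAlpha t - ((t : QuadOrd t) - 1)) = (t : QuadOrd t) - 2 := by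
    linear_combination hα
  have hmm' : (m : QuadOrd t) * (m' : QuadOrd t) = (t : QuadOrd t) - 2 := by
    exact_mod_cast congrArg (Int.cast : ℤ → QuadOrd t) hmm
  apply le_antisymm
  · rw [Ideal.mul_le]
    intro r hr s hs
    rw [Ideal.mem_span_pair] at hr hs
    obtain ⟨a, b, rfl⟩ := hr
    obtain ⟨c, d, rfl⟩ := hs
    rw [Ideal.mem_span_singleton]
    refine ⟨a * c * (ordAlpha t - ((t : QuadOrd t) - 1)) + a * (m : QuadOrd t) * d
      + b * c * (m' : QuadOrd t) + b * d * (ordAlpha t - 1), ?_⟩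
    linear_combination a * c * hmm' - a * c * key
  · rw [Ideal.span_le, Set.singleton_subset_iff]
    obtain ⟨a, b, hab⟩ := hcop
    have h1 : (m : QuadOrd t) * (ordAlpha t - 1) ∈
        Ideal.span ({(m : QuadOrd t), ordAlpha t - 1} : Set (QuadOrd t)) *
        Ideal.span ({(m' : QuadOrd t), ordAlpha t - 1} : Set (QuadOrd t)) :=
      Ideal.mul_mem_mul (Ideal.subset_span (by simp)) (Ideal.subset_span (by simp))
    have h2 : (ordAlpha t - 1) * (m' : QuadOrd t) ∈
        Ideal.span ({(m : QuadOrd t), ordAlpha t - 1} : Set (QuadOrd t)) *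
        Ideal.span ({(m' : QuadOrd t), ordAlpha t - 1} : Set (QuadOrd t)) :=
      Ideal.mul_mem_mul (Ideal.subset_span (by simp)) (Ideal.subset_span (by simp))
    have hab' : (a : QuadOrd t) * (m : QuadOrd t) + (b : QuadOrd t) * (m' : QuadOrd t) = 1 := by
      exact_mod_cast congrArg (Int.cast : ℤ → QuadOrd t) hab
    have : (ordAlpha t - 1 : QuadOrd t) =
        (a : QuadOrd t) * ((m : QuadOrd t) * (ordAlpha t - 1))
        + (b : QuadOrd t) * ((ordAlpha t - 1) * (m' : QuadOrd t)) := by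
      linear_combination (1 - ordAlpha t) * hab'
    have hmem := Ideal.add_mem _ (Ideal.mul_mem_left _ ((a : QuadOrd t)) h1)
      (Ideal.mul_mem_left _ ((b : QuadOrd t)) h2)
    rw [← this] at hmem
    exact hmem
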